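/- Let C be a commutative ring, s ≥ 1, t ≥ 2, and consider the polynomial ring C[x₁,…,x_{s+1}, a₁,…,a_{s+1}]. Let F_{s+1,2} = (x₁⋯x_{s+1})² − ∑_{i=1}^{s+1} aᵢ xᵢ³. If for some α ≥ 0, β ≥ 1 one has x₁^α ⋯ x_{s+1}^α ∈ ⟨x₁^{α+β},…,x_{s+1}^{α+β}, F_{s+1,2}⟩, then x₁^α ⋯ xₛ^α ∈ ⟨x₁^{α+β},…,xₛ^{α+β}, F_{s,2}⟩ in C[x₁,…,xₛ,a₁,…,aₛ], where F_{s,2} = (x₁⋯xₛ)² − ∑_{i=1}^{s} aᵢ xᵢ³. -/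

import Mathlib

open MvPolynomial

noncomputable def fmap (C : Type*) [CommRing C] (s : ℕ) :
    Fin (s + 1) ⊕ Fin (s + 1) → Polynomial (MvPolynomial (Fin s ⊕ Fin s) C) :=
  Sum.elim
    (fun i => if h : (i : ℕ) < s then Polynomial.C (X (Sum.inl ⟨i, h⟩)) else Polynomial.X)
    (fun i => if h : (i : ℕ) < s then Polynomial.C (X (Sum.inr ⟨i, h⟩)) * Polynomial.X ^ 2 else 0)

/-- The inductive step in Katzman's Proposition that `H_{s,2} ≠ 0`: if
`x₁^α⋯x_{s+1}^α ∈ ⟨x₁^{α+β},…,x_{s+1}^{α+β}, F_{s+1,2}⟩` in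
`C[x₁,…,x_{s+1},a₁,…,a_{s+1}]`, where
`F_{s+1,2} = (x₁⋯x_{s+1})² − ∑_{i=1}^{s+1} aᵢxᵢ³`, then
`x₁^α⋯xₛ^α ∈ ⟨x₁^{α+β},…,xₛ^{α+β}, F_{s,2}⟩` in `C[x₁,…,xₛ,a₁,…,aₛ]`.
Here `X (Sum.inl i)` plays the role of `xᵢ` and `X (Sum.inr i)` of `aᵢ`. -/
theorem stmt_8 (C : Type*) [CommRing C] (s : ℕ) (hs : 1 ≤ s) (α β : ℕ) (hβ : 1 ≤ β)
    (h : (∏ i : Fin (s + 1), (X (Sum.inl i) : MvPolynomial (Fin (s + 1) ⊕ Fin (s + 1)) C)) ^ α ∈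
      Ideal.span (insert
        ((∏ i : Fin (s + 1), (X (Sum.inl i) : MvPolynomial (Fin (s + 1) ⊕ Fin (s + 1)) C)) ^ 2
          - ∑ i : Fin (s + 1), X (Sum.inr i) * X (Sum.inl i) ^ 3)
        (Set.range fun i : Fin (s + 1) =>
          (X (Sum.inl i) : MvPolynomial (Fin (s + 1) ⊕ Fin (s + 1)) C) ^ (α + β)))) :
    (∏ i : Fin s, (X (Sum.inl i) : MvPolynomial (Fin s ⊕ Fin s) C)) ^ α ∈
      Ideal.span (insert
        ((∏ i : Fin s, (X (Sum.inl i) : MvPolynomial (Fin s ⊕ Fin s) C)) ^ 2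
          - ∑ i : Fin s, X (Sum.inr i) * X (Sum.inl i) ^ 3)
        (Set.range fun i : Fin s =>
          (X (Sum.inl i) : MvPolynomial (Fin s ⊕ Fin s) C) ^ (α + β))) := by
  classical
  set P : MvPolynomial (Fin s ⊕ Fin s) C := ∏ i : Fin s, X (Sum.inl i) with hP
  set G : MvPolynomial (Fin s ⊕ Fin s) C := P ^ 2 - ∑ i : Fin s, X (Sum.inr i) * X (Sum.inl i) ^ 3 with hG
  set J : Ideal (MvPolynomial (Fin s ⊕ Fin s) C) :=
    Ideal.span (insert G (Set.range fun i : Fin s => (X (Sum.inl i) : MvPolynomial (Fin s ⊕ Fin s) C) ^ (α + β))) with hJ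
  let φ : MvPolynomial (Fin (s + 1) ⊕ Fin (s + 1)) C →+* Polynomial (MvPolynomial (Fin s ⊕ Fin s) C) :=
    (MvPolynomial.aeval (fmap C s)).toRingHom
  -- basic evaluations
  have hXl : ∀ i : Fin s, φ (X (Sum.inl i.castSucc)) = Polynomial.C (X (Sum.inl i)) := by
    intro i
    show (MvPolynomial.aeval (fmap C s)) _ = _
    rw [MvPolynomial.aeval_X]
    simp only [fmap, Sum.elim_inl, Fin.coe_castSucc, i.isLt, dif_pos]
  have hXr : ∀ i : Fin s, φ (X (Sum.inr i.castSucc)) =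
      Polynomial.C (X (Sum.inr i)) * Polynomial.X ^ 2 := by
    intro i
    show (MvPolynomial.aeval (fmap C s)) _ = _
    rw [MvPolynomial.aeval_X]
    simp only [fmap, Sum.elim_inr, Fin.coe_castSucc, i.isLt, dif_pos]
  have hXll : φ (X (Sum.inl (Fin.last s))) = Polynomial.X := by
    show (MvPolynomial.aeval (fmap C s)) _ = _
    rw [MvPolynomial.aeval_X]; simp [fmap]
  have hXrl : φ (X (Sum.inr (Fin.last s))) = 0 := by
    show (MvPolynomial.aeval (fmap C s)) _ = _
    rw [MvPolynomial.aeval_X]; simp [fmap]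
  -- image of the product
  have hprod : φ (∏ i : Fin (s + 1), X (Sum.inl i)) = Polynomial.C P * Polynomial.X := by
    rw [map_prod, Fin.prod_univ_castSucc, hXll]
    simp_rw [hXl]
    rw [← map_prod]
  -- image of F
  have hF : φ ((∏ i : Fin (s + 1), (X (Sum.inl i) : MvPolynomial (Fin (s + 1) ⊕ Fin (s + 1)) C)) ^ 2
      - ∑ i : Fin (s + 1), X (Sum.inr i) * X (Sum.inl i) ^ 3) = Polynomial.C G * Polynomial.X ^ 2 := by
    rw [map_sub, map_pow, hprod, map_sum, Fin.sum_univ_castSucc]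
    simp only [map_mul, map_pow, hXrl, hXll, zero_mul, add_zero]
    simp_rw [hXr, hXl]
    rw [hG, map_sub, map_pow, map_sum]
    simp_rw [map_mul, map_pow]
    rw [sub_mul, Finset.sum_mul]
    refine congrArg₂ (· - ·) ?_ ?_
    · ring
    · exact Finset.sum_congr rfl fun x _ => by ring
  -- membership after mapping
  have hmem : φ ((∏ i : Fin (s + 1), (X (Sum.inl i) : MvPolynomial (Fin (s + 1) ⊕ Fin (s + 1)) C)) ^ α)
      ∈ Ideal.span (φ '' (insert
        ((∏ i : Fin (s + 1), (X (Sum.inl i) : MvPolynomial (Fin (s + 1) ⊕ Fin (s + 1)) C)) ^ 2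
          - ∑ i : Fin (s + 1), X (Sum.inr i) * X (Sum.inl i) ^ 3)
        (Set.range fun i : Fin (s + 1) =>
          (X (Sum.inl i) : MvPolynomial (Fin (s + 1) ⊕ Fin (s + 1)) C) ^ (α + β)))) := by
    rw [← Ideal.map_span]
    exact Ideal.mem_map_of_mem φ h
  -- every element of the image set has all low coefficients in J
  have himg : ∀ g ∈ (φ '' (insert
        ((∏ i : Fin (s + 1), (X (Sum.inl i) : MvPolynomial (Fin (s + 1) ⊕ Fin (s + 1)) C)) ^ 2
          - ∑ i : Fin (s + 1), X (Sum.inr i) * X (Sum.inl i) ^ 3)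
        (Set.range fun i : Fin (s + 1) =>
          (X (Sum.inl i) : MvPolynomial (Fin (s + 1) ⊕ Fin (s + 1)) C) ^ (α + β)))),
      ∀ n ≤ α, g.coeff n ∈ J := by
    rintro g ⟨p, hp, rfl⟩ n hn
    rcases hp with rfl | ⟨i, rfl⟩
    · rw [hF, Polynomial.coeff_C_mul, Polynomial.coeff_X_pow]
      have hGJ : G ∈ J := Ideal.subset_span (Set.mem_insert _ _)
      split <;> simp [hGJ, J.zero_mem]
    · -- p = X (inl i) ^ (α+β)
      rw [map_pow]
      rcases lt_or_ge (i : ℕ) s with hi | hi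
      · have : φ (X (Sum.inl i)) = Polynomial.C (X (Sum.inl ⟨i, hi⟩)) := by
          show (MvPolynomial.aeval (fmap C s)) _ = _
          rw [MvPolynomial.aeval_X]
          simp only [fmap, Sum.elim_inl, hi, dif_pos]
        rw [this, ← map_pow, Polynomial.coeff_C]
        have hx : (X (Sum.inl ⟨i, hi⟩) : MvPolynomial (Fin s ⊕ Fin s) C) ^ (α + β) ∈ J :=
          Ideal.subset_span (Set.mem_insert_iff.2 (Or.inr ⟨⟨i, hi⟩, rfl⟩))
        split <;> simp [hx, J.zero_mem]
      · have hil : i = Fin.last s := Fin.ext (le_antisymm (Nat.lt_succ_iff.1 i.isLt) hi)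
        rw [hil, hXll, Polynomial.coeff_X_pow]
        have hne : ¬ (n = α + β) := by omega
        rw [if_neg hne]
        exact J.zero_mem
  -- span induction: all coefficients ≤ α of any element of the span lie in J
  have key : ∀ p ∈ Ideal.span (φ '' (insert
        ((∏ i : Fin (s + 1), (X (Sum.inl i) : MvPolynomial (Fin (s + 1) ⊕ Fin (s + 1)) C)) ^ 2
          - ∑ i : Fin (s + 1), X (Sum.inr i) * X (Sum.inl i) ^ 3)
        (Set.range fun i : Fin (s + 1) =>
          (X (Sum.inl i) : MvPolynomial (Fin (s + 1) ⊕ Fin (s + 1)) C) ^ (α + β)))),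
      ∀ n ≤ α, p.coeff n ∈ J := by
    intro p hp
    refine Submodule.span_induction (p := fun q _ => ∀ n ≤ α, q.coeff n ∈ J) ?_ ?_ ?_ ?_ hp
    · exact himg
    · intro n _; simp [J.zero_mem]
    · intro x y _ _ hx hy n hn
      rw [Polynomial.coeff_add]; exact J.add_mem (hx n hn) (hy n hn)
    · intro q x _ hx n hn
      rw [smul_eq_mul, Polynomial.coeff_mul]
      refine J.sum_mem fun c hc => ?_
      replace hc := Finset.HasAntidiagonal.mem_antidiagonal.mp hc
      exact J.mul_mem_left _ (hx c.2 (by omega))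
  -- conclude
  have hφα : φ ((∏ i : Fin (s + 1), (X (Sum.inl i) : MvPolynomial (Fin (s + 1) ⊕ Fin (s + 1)) C)) ^ α)
      = Polynomial.C (P ^ α) * Polynomial.X ^ α := by
    rw [map_pow, hprod, mul_pow, ← map_pow]
  have hfin := key _ hmem α le_rfl
  rw [hφα, Polynomial.coeff_C_mul, Polynomial.coeff_X_pow, if_pos rfl, mul_one] at hfin
  exact hfin
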